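/- Let k and ℓ be odd positive integers with ℓ > k. For every integer n ≥ 2, one has |a_{k,ℓ}(n,n)| > n^{2k+3ℓ}·(1 − 1/n²), where the inequality is understood in the rational numbers. -/

import Mathlib

/-- `a_{k,ℓ}(n,d) = (n^{3ℓ}+n^{2ℓ}+n^ℓ+1)·d^{3k} − (n^{3k}+n^{2k}+n^k+1)·d^{3ℓ}`. -/
def aD (k l n d : ℕ) : ℤ :=
  ((n : ℤ) ^ (3 * l) + (n : ℤ) ^ (2 * l) + (n : ℤ) ^ l + 1) * (d : ℤ) ^ (3 * k)
    - ((n : ℤ) ^ (3 * k) + (n : ℤ) ^ (2 * k) + (n : ℤ) ^ k + 1) * (d : ℤ) ^ (3 * l)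

theorem aD_abs_lower_bound (k l n : ℕ) (hk : Odd k) (hl : Odd l) (hkpos : 0 < k)
    (hkl : k < l) (hn : 2 ≤ n) :
    (n : ℚ) ^ (2 * k + 3 * l) * (1 - 1 / (n : ℚ) ^ 2) < ((|aD k l n n| : ℤ) : ℚ) := by
  have hl2 : k + 2 ≤ l := by
    rcases hk with ⟨a, ha⟩; rcases hl with ⟨b, hb⟩; omega
  set N : ℤ := (n : ℤ) with hNdef
  have hN : (2:ℤ) ≤ N := by rw [hNdef]; exact_mod_cast hn
  have hN1 : (1:ℤ) < N := by linarith
  have hN1' : (1:ℤ) ≤ N := by linarith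
  have hval : aD k l n n =
      (N ^ (2*l+3*k) + N ^ (l+3*k) + N ^ (3*k))
        - (N ^ (2*k+3*l) + N ^ (k+3*l) + N ^ (3*l)) := by
    unfold aD; push_cast; ring
  have h1 : N ^ (2*l+3*k) ≤ N ^ (2*k+3*l-2) :=
    pow_le_pow_right₀ hN1' (by omega)
  have h2 : N ^ (l+3*k) < N ^ (k+3*l) :=
    pow_lt_pow_right₀ hN1 (by omega)
  have h3 : N ^ (3*k) ≤ N ^ (3*l) :=
    pow_le_pow_right₀ hN1' (by omega)
  have hx2 : N ^ (2*k+3*l-2) ≤ N ^ (2*k+3*l) :=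
    pow_le_pow_right₀ hN1' (by omega)
  have hXY : (N ^ (2*l+3*k) + N ^ (l+3*k) + N ^ (3*k))
      < (N ^ (2*k+3*l) + N ^ (k+3*l) + N ^ (3*l)) := by
    have := h1.trans hx2
    linarith
  have habs : |aD k l n n| =
      (N ^ (2*k+3*l) + N ^ (k+3*l) + N ^ (3*l))
        - (N ^ (2*l+3*k) + N ^ (l+3*k) + N ^ (3*k)) := by
    rw [hval, abs_of_nonpos (by linarith)]; ring
  have hint : N ^ (2*k+3*l) - N ^ (2*k+3*l-2) < |aD k l n n| := by
    rw [habs]; linarith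
  have hnq : (n:ℚ) ≠ 0 := by positivity
  have hLHS : (n : ℚ) ^ (2 * k + 3 * l) * (1 - 1 / (n : ℚ) ^ 2)
      = ((N ^ (2*k+3*l) - N ^ (2*k+3*l-2) : ℤ) : ℚ) := by
    have hsplit : (n:ℚ) ^ (2*k+3*l) = (n:ℚ) ^ (2*k+3*l-2) * (n:ℚ) ^ 2 := by
      rw [← pow_add]; congr 1; omega
    simp only [hNdef]
    push_cast
    rw [hsplit]; field_simp
  rw [hLHS]
  exact_mod_cast hint
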